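/- For any positive integer d, let T = (ζ_i^{j−1})_{i,j=1}^{d} be the Vandermonde matrix of the points ζ_k = 2 cos(π(2k−1)/(2d)). Then there exists a matrix S ∈ SL_d(ℤ) such that the matrix T̃ = T S satisfies: (i) every entry t̃_{i,j} of T̃ has absolute value |t̃_{i,j}| ≤ 2, and (ii) T̃^⊤ T̃ = diag(d, 2d, …, 2d). In particular, the Chebyshev-Frolov lattice T(ℤ^d) is orthogonal. -/
import Mathlib


open Matrix

/-- The Vandermonde matrix of the points `ζ_k = 2 cos(π(2k−1)/(2d))`, `k = 1, …, d`. -/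
noncomputable def chebVandermonde (d : ℕ) : Matrix (Fin d) (Fin d) ℝ :=
  Matrix.of fun i j =>
    (2 * Real.cos (Real.pi * (2 * ((i : ℕ) + 1 : ℝ) - 1) / (2 * (d : ℝ)))) ^ (j : ℕ)

open Polynomial

theorem dicksonMD : ∀ n : ℕ, (dickson 1 (1:ℤ) n).natDegree ≤ n ∧
    (1 ≤ n → (dickson 1 (1:ℤ) n).Monic ∧ (dickson 1 (1:ℤ) n).natDegree = n)
  | 0 => by
    constructor
    · simp [dickson_zero]
      norm_num
    · omega
  | 1 => by
    refine ⟨by simp, fun _ => ⟨by simpa using monic_X, by simp⟩⟩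
  | n + 2 => by
    obtain ⟨h1, -⟩ := dicksonMD n
    obtain ⟨h2, h3⟩ := (dicksonMD (n + 1)).2 (by omega)
    have hXD : (X * dickson 1 (1:ℤ) (n+1)).Monic := monic_X.mul h2
    have hXDdeg : (X * dickson 1 (1:ℤ) (n+1)).natDegree = n + 2 := by
      rw [natDegree_mul (X_ne_zero) h2.ne_zero, natDegree_X, h3]; omega
    have hdlt : (C (1:ℤ) * dickson 1 (1:ℤ) n).degree < (X * dickson 1 (1:ℤ) (n+1)).degree := by
      simp only [C_1, one_mul]
      rcases eq_or_ne (dickson 1 (1:ℤ) n) 0 with h | h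
      · rw [h, degree_zero]
        exact bot_lt_iff_ne_bot.2 (degree_eq_bot.not.2 hXD.ne_zero)
      · rw [degree_eq_natDegree hXD.ne_zero, degree_eq_natDegree h, hXDdeg]
        exact_mod_cast lt_of_le_of_lt h1 (by omega)
    have hm : (dickson 1 (1:ℤ) (n+2)).Monic := by
      rw [dickson_add_two, sub_eq_add_neg]
      exact hXD.add_of_left (by rwa [degree_neg])
    have hdeg : (dickson 1 (1:ℤ) (n+2)).natDegree = n + 2 := by
      rw [dickson_add_two, sub_eq_add_neg, natDegree_add_eq_left_of_degree_lt]
      · exact hXDdeg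
      · rwa [degree_neg]
    exact ⟨hdeg.le, fun _ => ⟨hm, hdeg⟩⟩

theorem dickson_eval_two_cos : ∀ (n : ℕ) (θ : ℝ),
    (dickson 1 (1:ℝ) n).eval (2 * Real.cos θ) = 2 * Real.cos (n * θ)
  | 0, θ => by norm_num [dickson_zero]
  | 1, θ => by simp
  | n + 2, θ => by
    rw [dickson_add_two]
    simp only [eval_sub, eval_mul, eval_X, C_1, eval_one, one_mul,
      dickson_eval_two_cos (n+1) θ, dickson_eval_two_cos n θ]
    have e1 : ((n:ℝ) + 2) * θ = ((n:ℝ)+1) * θ + θ := by ring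
    have e2 : (n:ℝ) * θ = ((n:ℝ)+1) * θ - θ := by ring
    push_cast
    rw [e1, e2, Real.cos_add, Real.cos_sub]
    ring

theorem sum_cos_zero (d m : ℕ) (hd : 0 < d) (h1 : 1 ≤ m) (h2 : m < 2 * d) :
    ∑ i ∈ Finset.range d,
      Real.cos ((m : ℝ) * (Real.pi * (2 * (i : ℝ) + 1) / (2 * (d : ℝ)))) = 0 := by
  have hd' : (d : ℝ) ≠ 0 := Nat.cast_ne_zero.2 hd.ne'
  set c : ℝ := Real.sin ((m : ℝ) * Real.pi / (2 * (d : ℝ))) with hc_def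
  have hpos : 0 < (m : ℝ) * Real.pi / (2 * (d : ℝ)) := by
    apply div_pos (mul_pos (by exact_mod_cast h1) Real.pi_pos)
    positivity
  have hlt : (m : ℝ) * Real.pi / (2 * (d : ℝ)) < Real.pi := by
    rw [div_lt_iff₀ (by positivity)]
    have : (m : ℝ) < 2 * d := by exact_mod_cast h2
    nlinarith [Real.pi_pos]
  have hc : c ≠ 0 := (Real.sin_pos_of_pos_of_lt_pi hpos hlt).ne'
  have key : ∀ i : ℕ, 2 * c * Real.cos ((m : ℝ) * (Real.pi * (2 * (i : ℝ) + 1) / (2 * (d : ℝ))))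
      = Real.sin (((i : ℝ) + 1) * ((m : ℝ) * Real.pi / (d : ℝ)))
        - Real.sin ((i : ℝ) * ((m : ℝ) * Real.pi / (d : ℝ))) := by
    intro i
    rw [Real.sin_sub_sin]
    have e1 : (((i : ℝ) + 1) * ((m : ℝ) * Real.pi / (d : ℝ))
        - (i : ℝ) * ((m : ℝ) * Real.pi / (d : ℝ))) / 2 = (m : ℝ) * Real.pi / (2 * (d : ℝ)) := by
      field_simp; ring
    have e2 : (((i : ℝ) + 1) * ((m : ℝ) * Real.pi / (d : ℝ))
        + (i : ℝ) * ((m : ℝ) * Real.pi / (d : ℝ))) / 2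
        = (m : ℝ) * (Real.pi * (2 * (i : ℝ) + 1) / (2 * (d : ℝ))) := by
      field_simp; ring
    rw [e1, e2, hc_def]
  have tele : ∑ i ∈ Finset.range d,
      (Real.sin (((i : ℝ) + 1) * ((m : ℝ) * Real.pi / (d : ℝ)))
        - Real.sin ((i : ℝ) * ((m : ℝ) * Real.pi / (d : ℝ)))) = 0 := by
    have := Finset.sum_range_sub (fun i : ℕ => Real.sin ((i : ℝ) * ((m : ℝ) * Real.pi / (d : ℝ)))) d
    simp only [Nat.cast_add, Nat.cast_one] at this ⊢
    rw [this]
    have : (d : ℝ) * ((m : ℝ) * Real.pi / (d : ℝ)) = (m : ℝ) * Real.pi := by field_simp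
    rw [this, Real.sin_nat_mul_pi]
    simp
  have : 2 * c * ∑ i ∈ Finset.range d,
      Real.cos ((m : ℝ) * (Real.pi * (2 * (i : ℝ) + 1) / (2 * (d : ℝ)))) = 0 := by
    rw [Finset.mul_sum]
    rw [Finset.sum_congr rfl fun i _ => key i]
    exact tele
  have h2c : (2 : ℝ) * c ≠ 0 := by positivity
  exact (mul_eq_zero.1 this).resolve_left h2c

noncomputable def chebS (d : ℕ) : Matrix (Fin d) (Fin d) ℤ :=
  Matrix.of fun i j =>
    if (j : ℕ) = 0 then (if i = j then 1 else 0) else (dickson 1 (1:ℤ) (j : ℕ)).coeff (i : ℕ)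

theorem chebS_det (d : ℕ) : (chebS d).det = 1 := by
  have ht : (chebS d).BlockTriangular id := by
    intro i j hij
    simp only [id] at hij
    simp only [chebS, Matrix.of_apply]
    rcases eq_or_ne ((j : ℕ)) 0 with hj | hj
    · rw [if_pos hj, if_neg hij.ne']
    · rw [if_neg hj]
      apply Polynomial.coeff_eq_zero_of_natDegree_lt
      calc (dickson 1 (1:ℤ) (j : ℕ)).natDegree ≤ (j : ℕ) := (dicksonMD (j : ℕ)).1
        _ < (i : ℕ) := hij
  rw [Matrix.det_of_upperTriangular ht]
  apply Finset.prod_eq_one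
  intro i _
  simp only [chebS, Matrix.of_apply]
  rcases eq_or_ne ((i : ℕ)) 0 with hi | hi
  · simp [hi]
  · rw [if_neg hi]
    obtain ⟨hm, hdeg⟩ := (dicksonMD (i : ℕ)).2 (by omega)
    have := hm.coeff_natDegree
    rwa [hdeg] at this

theorem cheb_entry (d : ℕ) (hd : 0 < d) (i j : Fin d) :
    (chebVandermonde d * (chebS d).map (Int.cast : ℤ → ℝ)) i j =
      if (j : ℕ) = 0 then 1
      else 2 * Real.cos ((j : ℕ) * (Real.pi * (2 * (i : ℕ) + 1) / (2 * (d : ℝ)))) := by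
  have hang : Real.pi * (2 * ((i : ℕ) + 1 : ℝ) - 1) / (2 * (d : ℝ))
      = Real.pi * (2 * (i : ℕ) + 1) / (2 * (d : ℝ)) := by ring_nf
  rw [Matrix.mul_apply]
  simp only [chebVandermonde, chebS, Matrix.map_apply, Matrix.of_apply, hang]
  set θ := Real.pi * (2 * ((i : ℕ) : ℝ) + 1) / (2 * (d : ℝ)) with hθ
  have hmap : dickson 1 (1:ℝ) (j : ℕ) = (dickson 1 (1:ℤ) (j : ℕ)).map (Int.castRingHom ℝ) := by
    rw [map_dickson]; norm_num
  have hcoeff : ∀ k : ℕ, (dickson 1 (1:ℝ) (j : ℕ)).coeff k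
      = ((dickson 1 (1:ℤ) (j : ℕ)).coeff k : ℝ) := by
    intro k; rw [hmap, Polynomial.coeff_map]; simp
  rcases eq_or_ne ((j : ℕ)) 0 with hj | hj
  · simp only [hj, ite_true, eq_self_iff_true, if_true, apply_ite (fun z : ℤ => (z : ℝ)),
      Int.cast_one, Int.cast_zero, mul_ite, mul_one, mul_zero]
    rw [Finset.sum_ite_eq' Finset.univ j (fun k => (2 * Real.cos θ) ^ (k : ℕ))]
    simp [hj]
  · simp only [if_neg hj]
    have key : (dickson 1 (1:ℝ) (j : ℕ)).eval (2 * Real.cos θ)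
        = ∑ k ∈ Finset.range d, (dickson 1 (1:ℝ) (j : ℕ)).coeff k * (2 * Real.cos θ) ^ k := by
      apply Polynomial.eval_eq_sum_range'
      calc (dickson 1 (1:ℝ) (j : ℕ)).natDegree
          ≤ (dickson 1 (1:ℤ) (j : ℕ)).natDegree := by
            rw [hmap]; exact Polynomial.natDegree_map_le
        _ ≤ (j : ℕ) := (dicksonMD (j : ℕ)).1
        _ < d := j.isLt
    rw [dickson_eval_two_cos (j : ℕ) θ] at key
    rw [key]
    rw [Fin.sum_univ_eq_sum_range
      (fun k => (2 * Real.cos θ) ^ k * ((dickson 1 (1:ℤ) (j : ℕ)).coeff k : ℝ)) d]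
    exact Finset.sum_congr rfl fun k _ => by rw [← hcoeff k]; ring

theorem two_cos_mul (a b : ℝ) :
    (2 * Real.cos a) * (2 * Real.cos b) = 2 * Real.cos (a + b) + 2 * Real.cos (a - b) := by
  rw [Real.cos_add, Real.cos_sub]; ring

theorem chebyshevFrolov_orthogonal (d : ℕ) (hd : 0 < d) :
    ∃ S : Matrix (Fin d) (Fin d) ℤ, S.det = 1 ∧
      (∀ i j, |(chebVandermonde d * S.map (Int.cast : ℤ → ℝ)) i j| ≤ 2) ∧
      (chebVandermonde d * S.map (Int.cast : ℤ → ℝ))ᵀ *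
          (chebVandermonde d * S.map (Int.cast : ℤ → ℝ)) =
        Matrix.diagonal fun i : Fin d => if (i : ℕ) = 0 then (d : ℝ) else 2 * (d : ℝ) := by
  refine ⟨chebS d, chebS_det d, ?_, ?_⟩
  · intro i j
    rw [cheb_entry d hd i j]
    split
    · norm_num
    · rw [abs_mul]
      calc |(2:ℝ)| * |Real.cos _| ≤ 2 * 1 := by
            rw [abs_two]
            exact mul_le_mul_of_nonneg_left (Real.abs_cos_le_one _) (by norm_num)
        _ = 2 := by norm_num
  · have hS : ∀ m : ℕ, 1 ≤ m → m < 2 * d →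
        ∑ i : Fin d, Real.cos ((m : ℝ) * (Real.pi * (2 * (i : ℕ) + 1) / (2 * (d : ℝ)))) = 0 := by
      intro m h1 h2
      rw [Fin.sum_univ_eq_sum_range
        (fun n : ℕ => Real.cos ((m : ℝ) * (Real.pi * (2 * (n : ℝ) + 1) / (2 * (d : ℝ))))) d]
      exact sum_cos_zero d m hd h1 h2
    ext j k
    rw [Matrix.mul_apply]
    simp only [Matrix.transpose_apply]
    rw [Finset.sum_congr rfl (fun i _ => by rw [cheb_entry d hd i j, cheb_entry d hd i k])]
    set θ : Fin d → ℝ := fun i => Real.pi * (2 * (i : ℕ) + 1) / (2 * (d : ℝ)) with hθ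
    rcases eq_or_ne ((j : ℕ)) 0 with hj | hj
    · rcases eq_or_ne ((k : ℕ)) 0 with hk | hk
      · have hjk : j = k := Fin.ext (hj.trans hk.symm)
        subst hjk
        simp only [hj, if_true, ite_true, one_mul, Finset.sum_const, Finset.card_univ,
          Fintype.card_fin, nsmul_eq_mul, mul_one, Matrix.diagonal_apply_eq]
      · have hjk : j ≠ k := fun h => hk (h ▸ hj)
        rw [Matrix.diagonal_apply_ne _ hjk]
        simp only [hj, if_true, ite_true, if_neg hk, one_mul]
        have h0 := hS (k : ℕ) (by omega) (by have := k.isLt; omega)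
        rw [← Finset.mul_sum, h0, mul_zero]
    · rcases eq_or_ne ((k : ℕ)) 0 with hk | hk
      · have hjk : j ≠ k := fun h => hj (h ▸ hk)
        rw [Matrix.diagonal_apply_ne _ hjk]
        simp only [hk, if_true, ite_true, if_neg hj, mul_one]
        have h0 := hS (j : ℕ) (by omega) (by have := j.isLt; omega)
        rw [← Finset.mul_sum, h0, mul_zero]
      · simp only [if_neg hj, if_neg hk]
        have keyi : ∀ i : Fin d, (2 * Real.cos ((j : ℕ) * θ i)) * (2 * Real.cos ((k : ℕ) * θ i))
            = 2 * Real.cos ((((j : ℕ) + (k : ℕ) : ℕ) : ℝ) * θ i)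
              + 2 * Real.cos (((((j : ℕ) - (k : ℕ)) + ((k : ℕ) - (j : ℕ)) : ℕ) : ℝ) * θ i) := by
          intro i
          rw [two_cos_mul]
          rcases le_total ((k : ℕ)) ((j : ℕ)) with h | h
          · rw [Nat.sub_eq_zero_of_le h]
            push_cast [h]
            ring_nf
          · rw [Nat.sub_eq_zero_of_le h]
            have : (j : ℕ) * θ i - (k : ℕ) * θ i = -(((k : ℕ) - (j : ℕ) : ℝ) * θ i) := by
              push_cast [h]; ring
            rw [this, Real.cos_neg]
            push_cast [h]
            ring_nf
        rw [Finset.sum_congr rfl (fun i _ => keyi i), Finset.sum_add_distrib,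
          ← Finset.mul_sum, ← Finset.mul_sum]
        rcases eq_or_ne j k with hjk | hjk
        · subst hjk
          rw [Matrix.diagonal_apply_eq]
          rw [Nat.sub_self, Nat.add_zero]
          have h1 := hS ((j : ℕ) + (j : ℕ)) (by omega) (by have := j.isLt; omega)
          rw [h1]
          have hcos0 : ∀ i : Fin d, Real.cos (((0 : ℕ) : ℝ) * θ i) = 1 := by
            intro i; norm_num
          rw [Finset.sum_congr rfl fun i _ => hcos0 i]
          simp [hj]
        · have hne : ((j : ℕ)) ≠ ((k : ℕ)) := fun h => hjk (Fin.ext h)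
          rw [Matrix.diagonal_apply_ne _ hjk]
          have h1 := hS ((j : ℕ) + (k : ℕ)) (by omega)
            (by have := j.isLt; have := k.isLt; omega)
          have h2 := hS (((j : ℕ) - (k : ℕ)) + ((k : ℕ) - (j : ℕ))) (by omega)
            (by have := j.isLt; have := k.isLt; omega)
          rw [h1, h2]; ring
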